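/- Let E be a real normed space and let ξ₀, ξ₁ be convex Katětov functions on E. Set r₀ = sup_{a∈E} |ξ₀(a) − ξ₁(a)| and r₁ = inf_{a∈E} (ξ₀(a) + ξ₁(a)). Then r₀ ≤ r₁, and for every real r with r₀ ≤ r ≤ r₁ there exists a seminorm N on E × ℝ × ℝ (the triple (a, α₀, α₁) encoding the vector α₀x₀ + α₁x₁ − a of E ⊕ ℝx₀ ⊕ ℝx₁) such that N(a, α, 0) = N^{ξ₀}(a, α) and N(a, 0, α) = N^{ξ₁}(a, α) for all a ∈ E, α ∈ ℝ, and N(0, 1, −1) = r (i.e., ‖x₀ − x₁‖ = r). -/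

import Mathlib

/-- A function `ξ` on a metric space is *Katětov* if `|ξ x - ξ y| ≤ d(x,y)` and
`d(x,y) ≤ ξ x + ξ y` for all `x, y`. -/
def IsKatetov {X : Type*} [MetricSpace X] (ξ : X → ℝ) : Prop :=
  ∀ x y : X, |ξ x - ξ y| ≤ dist x y ∧ dist x y ≤ ξ x + ξ y

/-- A seminorm (as a bare function): absolutely homogeneous and subadditive. -/
def IsSeminorm {V : Type*} [AddCommGroup V] [Module ℝ V] (N : V → ℝ) : Prop :=
  (∀ (t : ℝ) (v : V), N (t • v) = |t| * N v) ∧ ∀ v w : V, N (v + w) ≤ N v + N w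

/-- The function `N^ξ` on `E × ℝ`, where `(a, α)` encodes the vector `αx - a` of `E ⊕ ℝx`:
`N^ξ (a, α) = |α| ξ(a/α)` for `α ≠ 0`, and `N^ξ (a, 0) = ‖a‖`. -/
noncomputable def katetovSeminorm {E : Type*} [NormedAddCommGroup E] [NormedSpace ℝ E]
    (ξ : E → ℝ) (v : E × ℝ) : ℝ :=
  if v.2 = 0 then ‖v.1‖ else |v.2| * ξ (v.2⁻¹ • v.1)

section Aux
set_option linter.unusedSectionVars false
variable {E : Type*} [NormedAddCommGroup E] [NormedSpace ℝ E] {ξ : E → ℝ}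

lemma katetov_nonneg (h : IsKatetov ξ) (x : E) : 0 ≤ ξ x := by
  have := (h x x).2; simp [dist_self] at this; linarith

lemma katetov_lip (h : IsKatetov ξ) (x y : E) : ξ x ≤ ξ y + ‖x - y‖ := by
  have h1 := (h x y).1
  rw [dist_eq_norm] at h1
  have := abs_le.mp h1
  linarith [this.2]

lemma katetov_add (h : IsKatetov ξ) (x y : E) : ‖x - y‖ ≤ ξ x + ξ y := by
  rw [← dist_eq_norm]; exact (h x y).2

lemma katetovSeminorm_nonneg (h : IsKatetov ξ) (v : E × ℝ) : 0 ≤ katetovSeminorm ξ v := by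
  unfold katetovSeminorm
  split
  · exact norm_nonneg _
  · exact mul_nonneg (abs_nonneg _) (katetov_nonneg h _)

/-- mixed sign case: β < 0 < α + β -/
lemma coreMixed (hK : IsKatetov ξ) {α β : ℝ} (hβ : β < 0) (hγ : 0 < α + β) (u v : E) :
    |α + β| * ξ ((α + β)⁻¹ • (α • u + β • v)) ≤ |α| * ξ u + |β| * ξ v := by
  have hα : 0 < α := by linarith
  set x := (α + β)⁻¹ • (α • u + β • v) with hx
  have hxu : x - u = (β / (α + β)) • (v - u) := by
    rw [hx]; match_scalars <;> field_simp <;> ring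
  have hLip := katetov_lip hK x u
  have hnorm : ‖x - u‖ = (|β| / (α + β)) * ‖v - u‖ := by
    rw [hxu, norm_smul, Real.norm_eq_abs, abs_div, abs_of_pos hγ]
  have hAdd : ‖v - u‖ ≤ ξ v + ξ u := katetov_add hK v u
  have hnn : 0 ≤ ‖v - u‖ := norm_nonneg _
  clear_value x
  rw [abs_of_pos hγ, abs_of_pos hα, abs_of_neg hβ]
  have h1 : (α + β) * ξ x ≤ (α + β) * ξ u + |β| * ‖v - u‖ := by
    have h2 := mul_le_mul_of_nonneg_left hLip hγ.le
    rw [mul_add, hnorm] at h2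
    have e : (α + β) * (|β| / (α + β) * ‖v - u‖) = |β| * ‖v - u‖ := by field_simp
    linarith
  have h2 : |β| * ‖v - u‖ ≤ |β| * (ξ v + ξ u) := mul_le_mul_of_nonneg_left hAdd (abs_nonneg _)
  have hb : |β| = -β := abs_of_neg hβ
  nlinarith [katetov_nonneg hK u]

lemma corePos (hK : IsKatetov ξ) (hC : ConvexOn ℝ Set.univ ξ) {α β : ℝ}
    (hα : α ≠ 0) (hβ : β ≠ 0) (hγ : 0 < α + β) (u v : E) :
    |α + β| * ξ ((α + β)⁻¹ • (α • u + β • v)) ≤ |α| * ξ u + |β| * ξ v := by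
  rcases lt_or_gt_of_ne hβ with hβn | hβp
  · exact coreMixed hK hβn hγ u v
  rcases lt_or_gt_of_ne hα with hαn | hαp
  · have h := coreMixed hK hαn (by linarith : 0 < β + α) v u
    have e1 : β + α = α + β := by ring
    have e2 : β • v + α • u = α • u + β • v := by abel
    rw [e1, e2] at h
    linarith
  · -- both positive: convexity
    have hγ' : (α + β) ≠ 0 := hγ.ne'
    have hc := hC.2 (Set.mem_univ u) (Set.mem_univ v)
      (le_of_lt (div_pos hαp hγ)) (le_of_lt (div_pos hβp hγ)) (by field_simp)
    simp only [smul_eq_mul] at hc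
    have e : (α + β)⁻¹ • (α • u + β • v) = (α / (α + β)) • u + (β / (α + β)) • v := by
      match_scalars <;> field_simp
    rw [e, abs_of_pos hγ, abs_of_pos hαp, abs_of_pos hβp]
    have h3 := mul_le_mul_of_nonneg_left hc hγ.le
    have e2 : (α + β) * (α / (α + β) * ξ u + β / (α + β) * ξ v) = α * ξ u + β * ξ v := by
      field_simp
    linarith

lemma core (hK : IsKatetov ξ) (hC : ConvexOn ℝ Set.univ ξ) {α β : ℝ}
    (hα : α ≠ 0) (hβ : β ≠ 0) (hγ : α + β ≠ 0) (u v : E) :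
    |α + β| * ξ ((α + β)⁻¹ • (α • u + β • v)) ≤ |α| * ξ u + |β| * ξ v := by
  rcases lt_or_gt_of_ne hγ with hγn | hγp
  · have h := corePos hK hC (neg_ne_zero.2 hα) (neg_ne_zero.2 hβ) (by linarith : 0 < -α + -β) u v
    rw [show -α + -β = -(α+β) by ring] at h
    have e1 : (-α) • u + (-β) • v = -(α • u + β • v) := by module
    have e2 : (-(α+β))⁻¹ • (-(α • u + β • v)) = (α + β)⁻¹ • (α • u + β • v) := by
      rw [inv_neg, neg_smul, smul_neg, neg_neg]
    rw [e1, e2, abs_neg, abs_neg, abs_neg] at h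
    exact h
  · exact corePos hK hC hα hβ hγp u v
end Aux


section Aux2
set_option linter.unusedSectionVars false
variable {E : Type*} [NormedAddCommGroup E] [NormedSpace ℝ E] {ξ : E → ℝ}

lemma katetovSeminorm_smul (t : ℝ) (v : E × ℝ) :
    katetovSeminorm ξ (t • v) = |t| * katetovSeminorm ξ v := by
  obtain ⟨a, α⟩ := v
  rcases eq_or_ne t 0 with rfl | ht
  · simp [katetovSeminorm]
  rcases eq_or_ne α 0 with rfl | hα
  · simp [katetovSeminorm, Prod.smul_def, norm_smul, ht]
  · have htα : t * α ≠ 0 := mul_ne_zero ht hα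
    simp only [katetovSeminorm, Prod.smul_def, smul_eq_mul, if_neg htα, if_neg hα]
    have e : (t * α)⁻¹ • t • a = α⁻¹ • a := by
      match_scalars; field_simp
    rw [e, abs_mul]; ring

lemma katetovSeminorm_add (hK : IsKatetov ξ) (hC : ConvexOn ℝ Set.univ ξ) (v w : E × ℝ) :
    katetovSeminorm ξ (v + w) ≤ katetovSeminorm ξ v + katetovSeminorm ξ w := by
  obtain ⟨a, α⟩ := v
  obtain ⟨b, β⟩ := w
  have hsum : ((a, α) : E × ℝ) + (b, β) = (a + b, α + β) := rfl
  rw [hsum]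
  rcases eq_or_ne α 0 with rfl | hα
  · rcases eq_or_ne β 0 with rfl | hβ
    · simp only [katetovSeminorm, add_zero, eq_self_iff_true, if_true]
      exact norm_add_le a b
    · -- α = 0, β ≠ 0
      simp only [katetovSeminorm, zero_add, eq_self_iff_true, if_true, if_neg hβ]
      have hLip : ξ (β⁻¹ • (a + b)) ≤ ξ (β⁻¹ • b) + ‖β⁻¹ • a‖ := by
        have := katetov_lip hK (β⁻¹ • (a + b)) (β⁻¹ • b)
        have e : β⁻¹ • (a + b) - β⁻¹ • b = β⁻¹ • a := by module
        rwa [e] at this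
      have := mul_le_mul_of_nonneg_left hLip (abs_nonneg β)
      have e2 : |β| * ‖β⁻¹ • a‖ = ‖a‖ := by
        rw [norm_smul, Real.norm_eq_abs, abs_inv, ← mul_assoc,
          mul_inv_cancel₀ (abs_ne_zero.2 hβ), one_mul]
      rw [mul_add, e2] at this
      linarith
  rcases eq_or_ne β 0 with rfl | hβ
  · -- α ≠ 0, β = 0
    simp only [katetovSeminorm, add_zero, if_neg hα, eq_self_iff_true, if_true]
    have hLip : ξ (α⁻¹ • (a + b)) ≤ ξ (α⁻¹ • a) + ‖α⁻¹ • b‖ := by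
      have := katetov_lip hK (α⁻¹ • (a + b)) (α⁻¹ • a)
      have e : α⁻¹ • (a + b) - α⁻¹ • a = α⁻¹ • b := by module
      rwa [e] at this
    have := mul_le_mul_of_nonneg_left hLip (abs_nonneg α)
    have e2 : |α| * ‖α⁻¹ • b‖ = ‖b‖ := by
      rw [norm_smul, Real.norm_eq_abs, abs_inv, ← mul_assoc,
        mul_inv_cancel₀ (abs_ne_zero.2 hα), one_mul]
    rw [mul_add, e2] at this
    linarith
  rcases eq_or_ne (α + β) 0 with hγ | hγ
  · -- α + β = 0
    have hβα : β = -α := by linarith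
    simp only [katetovSeminorm, hγ, eq_self_iff_true, if_true, if_neg hα, if_neg hβ]
    have e : a + b = α • (α⁻¹ • a - β⁻¹ • b) := by
      rw [hβα]; match_scalars <;> field_simp
    rw [e, norm_smul, Real.norm_eq_abs]
    have h1 : ‖α⁻¹ • a - β⁻¹ • b‖ ≤ ξ (α⁻¹ • a) + ξ (β⁻¹ • b) :=
      katetov_add hK _ _
    have hba : |β| = |α| := by rw [hβα, abs_neg]
    rw [hba]
    nlinarith [abs_nonneg α]
  · -- generic case
    simp only [katetovSeminorm, if_neg hα, if_neg hβ, if_neg hγ]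
    have h := core hK hC hα hβ hγ (α⁻¹ • a) (β⁻¹ • b)
    rw [smul_inv_smul₀ hα, smul_inv_smul₀ hβ] at h
    exact h

lemma isSeminorm_katetovSeminorm (hK : IsKatetov ξ) (hC : ConvexOn ℝ Set.univ ξ) :
    IsSeminorm (katetovSeminorm ξ) :=
  ⟨fun t v => katetovSeminorm_smul t v, katetovSeminorm_add hK hC⟩
end Aux2

/-- Given convex Katětov functions `ξ₀, ξ₁` on `E`, with `r₀ = sup |ξ₀ - ξ₁|` and
`r₁ = inf (ξ₀ + ξ₁)`, we have `r₀ ≤ r₁`, and for every `r₀ ≤ r ≤ r₁` there is a seminorm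
on `E ⊕ ℝx₀ ⊕ ℝx₁` (triples `(a, α₀, α₁)` encoding `α₀x₀ + α₁x₁ - a`) restricting to
`N^{ξ₀}` on `E ⊕ ℝx₀` and to `N^{ξ₁}` on `E ⊕ ℝx₁`, with `‖x₀ - x₁‖ = r`. -/
theorem convexKatetov_amalgamation {E : Type*} [NormedAddCommGroup E] [NormedSpace ℝ E]
    (ξ₀ ξ₁ : E → ℝ) (hK₀ : IsKatetov ξ₀) (hC₀ : ConvexOn ℝ Set.univ ξ₀)
    (hK₁ : IsKatetov ξ₁) (hC₁ : ConvexOn ℝ Set.univ ξ₁)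
    (r₀ r₁ : ℝ) (hr₀ : r₀ = ⨆ a : E, |ξ₀ a - ξ₁ a|) (hr₁ : r₁ = ⨅ a : E, (ξ₀ a + ξ₁ a)) :
    r₀ ≤ r₁ ∧
    ∀ r : ℝ, r₀ ≤ r → r ≤ r₁ →
      ∃ N : E × ℝ × ℝ → ℝ, IsSeminorm N ∧
        (∀ (a : E) (α : ℝ), N (a, α, 0) = katetovSeminorm ξ₀ (a, α)) ∧
        (∀ (a : E) (α : ℝ), N (a, 0, α) = katetovSeminorm ξ₁ (a, α)) ∧
        N (0, 1, -1) = r := by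
  have hS₀ : IsSeminorm (katetovSeminorm ξ₀) := isSeminorm_katetovSeminorm hK₀ hC₀
  have hS₁ : IsSeminorm (katetovSeminorm ξ₁) := isSeminorm_katetovSeminorm hK₁ hC₁
  have hbd : ∀ a b : E, |ξ₀ a - ξ₁ a| ≤ ξ₀ b + ξ₁ b := by
    intro a b
    have h1 := katetov_lip hK₀ a b
    have h2 := katetov_add hK₁ a b
    have h3 := katetov_lip hK₁ a b
    have h4 := katetov_add hK₀ a b
    rw [abs_le]
    constructor <;> linarith
  have hBddA : BddAbove (Set.range fun a : E => |ξ₀ a - ξ₁ a|) :=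
    ⟨ξ₀ 0 + ξ₁ 0, by rintro x ⟨a, rfl⟩; exact hbd a 0⟩
  have hBddB : BddBelow (Set.range fun a : E => ξ₀ a + ξ₁ a) :=
    ⟨0, by
      rintro x ⟨a, rfl⟩
      have := katetov_nonneg hK₀ a
      have := katetov_nonneg hK₁ a
      dsimp; linarith⟩
  have hr0_le : ∀ a : E, |ξ₀ a - ξ₁ a| ≤ r₀ := fun a => hr₀ ▸ le_ciSup hBddA a
  have hle_r1 : ∀ a : E, r₁ ≤ ξ₀ a + ξ₁ a := fun a => hr₁ ▸ ciInf_le hBddB a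
  have hr01 : r₀ ≤ r₁ := by
    rw [hr₀, hr₁]
    exact ciSup_le fun a => le_ciInf fun b => hbd a b
  have hr0nn : 0 ≤ r₀ := le_trans (abs_nonneg _) (hr0_le 0)
  refine ⟨hr01, fun r hrl hru => ?_⟩
  have hrnn : 0 ≤ r := hr0nn.trans hrl
  have hcmp01 : ∀ (c : E) (t : ℝ),
      katetovSeminorm ξ₀ (c, t) ≤ katetovSeminorm ξ₁ (c, t) + |t| * r := by
    intro c t
    rcases eq_or_ne t 0 with rfl | ht
    · simp [katetovSeminorm]
    · simp only [katetovSeminorm, if_neg ht]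
      have h := (abs_le.mp ((hr0_le (t⁻¹ • c)).trans hrl)).2
      have h2 := mul_le_mul_of_nonneg_left (show ξ₀ (t⁻¹ • c) ≤ ξ₁ (t⁻¹ • c) + r by linarith)
        (abs_nonneg t)
      rw [mul_add] at h2
      linarith
  have hcmp10 : ∀ (c : E) (t : ℝ),
      katetovSeminorm ξ₁ (c, t) ≤ katetovSeminorm ξ₀ (c, t) + |t| * r := by
    intro c t
    rcases eq_or_ne t 0 with rfl | ht
    · simp [katetovSeminorm]
    · simp only [katetovSeminorm, if_neg ht]
      have h := (abs_le.mp ((hr0_le (t⁻¹ • c)).trans hrl)).1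
      have h2 := mul_le_mul_of_nonneg_left (show ξ₁ (t⁻¹ • c) ≤ ξ₀ (t⁻¹ • c) + r by linarith)
        (abs_nonneg t)
      rw [mul_add] at h2
      linarith
  set g : E × ℝ × ℝ → E × ℝ → ℝ := fun v p =>
    katetovSeminorm ξ₀ (p.1, v.2.1 - p.2) + katetovSeminorm ξ₁ (v.1 - p.1, v.2.2 + p.2)
      + |p.2| * r with hg
  have hgnn : ∀ v p, 0 ≤ g v p := by
    intro v p
    have n0 := katetovSeminorm_nonneg hK₀ ((p.1, v.2.1 - p.2) : E × ℝ)
    have n1 := katetovSeminorm_nonneg hK₁ ((v.1 - p.1, v.2.2 + p.2) : E × ℝ)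
    have n2 : 0 ≤ |p.2| * r := mul_nonneg (abs_nonneg _) hrnn
    simp only [hg]
    linarith
  have hbdd : ∀ v, BddBelow (Set.range (g v)) :=
    fun v => ⟨0, by rintro x ⟨p, rfl⟩; exact hgnn v p⟩
  refine ⟨fun v => ⨅ p : E × ℝ, g v p, ⟨?_, ?_⟩, ?_, ?_, ?_⟩
  · -- homogeneity
    intro t v
    rcases eq_or_ne t 0 with rfl | ht
    · simp only [zero_smul, abs_zero, zero_mul]
      apply le_antisymm
      · refine (ciInf_le (hbdd 0) ((0 : E), (0 : ℝ))).trans (le_of_eq ?_)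
        simp [hg, katetovSeminorm]
      · exact le_ciInf fun p => hgnn 0 p
    · have key : ∀ (v : E × ℝ × ℝ) (p : E × ℝ), g (t • v) (t • p) = |t| * g v p := by
        intro v p
        have h0 := hS₀.1 t ((p.1, v.2.1 - p.2) : E × ℝ)
        have h1 := hS₁.1 t ((v.1 - p.1, v.2.2 + p.2) : E × ℝ)
        have e0 : t • ((p.1, v.2.1 - p.2) : E × ℝ) = (t • p.1, t * v.2.1 - t * p.2) := by
          simp [Prod.smul_def, smul_eq_mul, mul_sub]
        have e1 : t • ((v.1 - p.1, v.2.2 + p.2) : E × ℝ)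
            = (t • v.1 - t • p.1, t * v.2.2 + t * p.2) := by
          simp [Prod.smul_def, smul_eq_mul, mul_add, smul_sub]
        rw [e0] at h0
        rw [e1] at h1
        simp only [hg, Prod.smul_fst, Prod.smul_snd, smul_eq_mul]
        rw [h0, h1, abs_mul]
        ring
      have habs : 0 < |t| := abs_pos.2 ht
      apply le_antisymm
      · rw [mul_comm, ← div_le_iff₀ habs]
        refine le_ciInf fun p => ?_
        rw [div_le_iff₀ habs]
        have h := ciInf_le (hbdd (t • v)) (t • p)
        rw [key v p] at h
        linarith
      · refine le_ciInf fun p => ?_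
        calc |t| * ⨅ q : E × ℝ, g v q ≤ |t| * g v (t⁻¹ • p) :=
              mul_le_mul_of_nonneg_left (ciInf_le (hbdd v) _) (abs_nonneg t)
          _ = g (t • v) (t • t⁻¹ • p) := (key v (t⁻¹ • p)).symm
          _ = g (t • v) p := by rw [smul_inv_smul₀ ht]
  · -- subadditivity
    intro v w
    have step : ∀ p q : E × ℝ, g (v + w) (p + q) ≤ g v p + g w q := by
      intro p q
      have h0 := hS₀.2 ((p.1, v.2.1 - p.2) : E × ℝ) ((q.1, w.2.1 - q.2) : E × ℝ)
      have h1 := hS₁.2 ((v.1 - p.1, v.2.2 + p.2) : E × ℝ) ((w.1 - q.1, w.2.2 + q.2) : E × ℝ)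
      have h2 : |p.2 + q.2| * r ≤ |p.2| * r + |q.2| * r := by
        rw [← add_mul]
        exact mul_le_mul_of_nonneg_right (abs_add_le _ _) hrnn
      have e0 : ((p.1, v.2.1 - p.2) : E × ℝ) + (q.1, w.2.1 - q.2)
          = ((p + q).1, (v + w).2.1 - (p + q).2) := by
        simp only [Prod.mk_add_mk, Prod.fst_add, Prod.snd_add, Prod.mk.injEq]
        refine ⟨by first | trivial | rfl, by first | trivial | ring⟩
      have e1 : ((v.1 - p.1, v.2.2 + p.2) : E × ℝ) + (w.1 - q.1, w.2.2 + q.2)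
          = ((v + w).1 - (p + q).1, (v + w).2.2 + (p + q).2) := by
        simp only [Prod.mk_add_mk, Prod.fst_add, Prod.snd_add, Prod.mk.injEq]
        refine ⟨by first | trivial | abel, by first | trivial | ring⟩
      simp only [hg]
      rw [← e0, ← e1]
      simp only [Prod.snd_add]
      linarith [h0, h1, h2]
    have key : ∀ p q : E × ℝ, (⨅ x, g (v + w) x) ≤ g v p + g w q :=
      fun p q => (ciInf_le (hbdd _) (p + q)).trans (step p q)
    have h1 : (⨅ x, g (v + w) x) - (⨅ x, g w x) ≤ ⨅ x, g v x := by
      refine le_ciInf fun p => ?_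
      rw [sub_le_iff_le_add]
      have h2 : (⨅ x, g (v + w) x) - g v p ≤ ⨅ x, g w x := by
        refine le_ciInf fun q => ?_
        rw [sub_le_iff_le_add]
        linarith [key p q]
      linarith
    linarith
  · -- restriction to ξ₀
    intro a α
    apply le_antisymm
    · refine (ciInf_le (hbdd _) ((a : E), (0 : ℝ))).trans (le_of_eq ?_)
      simp only [hg]
      norm_num
      simp [katetovSeminorm]
    · refine le_ciInf fun p => ?_
      have h1 := hcmp01 (a - p.1) p.2
      have h2 := hS₀.2 ((p.1, α - p.2) : E × ℝ) ((a - p.1, p.2) : E × ℝ)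
      have e : ((p.1, α - p.2) : E × ℝ) + (a - p.1, p.2) = (a, α) := by
        simp only [Prod.mk_add_mk, Prod.mk.injEq]
        exact ⟨by abel, by ring⟩
      rw [e] at h2
      simp only [hg]
      norm_num
      linarith
  · -- restriction to ξ₁
    intro a α
    apply le_antisymm
    · refine (ciInf_le (hbdd _) ((0 : E), (0 : ℝ))).trans (le_of_eq ?_)
      simp only [hg]
      norm_num
      simp [katetovSeminorm]
    · refine le_ciInf fun p => ?_
      have h1 := hcmp10 p.1 (-p.2)
      rw [abs_neg] at h1
      have h2 := hS₁.2 ((p.1, -p.2) : E × ℝ) ((a - p.1, α + p.2) : E × ℝ)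
      have e : ((p.1, -p.2) : E × ℝ) + (a - p.1, α + p.2) = (a, α) := by
        simp only [Prod.mk_add_mk, Prod.mk.injEq]
        exact ⟨by abel, by ring⟩
      rw [e] at h2
      simp only [hg]
      norm_num
      linarith
  · -- value at (0, 1, -1)
    apply le_antisymm
    · refine (ciInf_le (hbdd _) ((0 : E), (1 : ℝ))).trans (le_of_eq ?_)
      simp only [hg]
      norm_num
      simp [katetovSeminorm]
    · refine le_ciInf fun p => ?_
      obtain ⟨b, t⟩ := p
      simp only [hg]
      have hneg : katetovSeminorm ξ₁ ((0 : E) - b, -1 + t) = katetovSeminorm ξ₁ (b, 1 - t) := by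
        have h := hS₁.1 (-1) ((b, 1 - t) : E × ℝ)
        have e : (-1 : ℝ) • ((b, 1 - t) : E × ℝ) = (0 - b, -1 + t) := by
          simp only [Prod.smul_def, smul_eq_mul, Prod.mk.injEq]
          exact ⟨by module, by ring⟩
        rw [e] at h
        rw [h]
        simp
      rw [hneg]
      rcases le_or_gt (1 - t) 0 with hs | hs
      · have h1 : 1 ≤ |t| := by
          rw [abs_of_pos (by linarith : (0 : ℝ) < t)]
          linarith
        have h2 : r ≤ |t| * r := le_mul_of_one_le_left hrnn h1
        have n0 := katetovSeminorm_nonneg hK₀ ((b, 1 - t) : E × ℝ)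
        have n1 := katetovSeminorm_nonneg hK₁ ((b, 1 - t) : E × ℝ)
        linarith
      · set s := 1 - t with hsdef
        clear_value s
        have hsne : s ≠ 0 := hs.ne'
        have e0 : katetovSeminorm ξ₀ (b, s) = s * ξ₀ (s⁻¹ • b) := by
          simp [katetovSeminorm, hsne, abs_of_pos hs]
        have e1 : katetovSeminorm ξ₁ (b, s) = s * ξ₁ (s⁻¹ • b) := by
          simp [katetovSeminorm, hsne, abs_of_pos hs]
        have h2 := hle_r1 (s⁻¹ • b)
        have h3 : 1 - s ≤ |t| := by
          have e : 1 - s = t := by rw [hsdef]; ring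
          rw [e]
          exact le_abs_self t
        have h4 : s * r ≤ s * (ξ₀ (s⁻¹ • b) + ξ₁ (s⁻¹ • b)) :=
          mul_le_mul_of_nonneg_left (by linarith) hs.le
        rw [mul_add] at h4
        have h5 : (1 - |t|) * r ≤ s * r := mul_le_mul_of_nonneg_right (by linarith) hrnn
        have e5 : (1 - |t|) * r = r - |t| * r := by ring
        rw [e0, e1]
        linarith
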